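/- arXiv:1102.4712 — 3 statements merged into one kernel-verified Lean document; each statement's English description precedes it below -/
import Mathlib

section
/- (Lovász Local Lemma, symmetric case) Let A₁,…,Aₙ be events in a probability space such that each Aᵢ is mutually independent of all but at most d of the other events, and P(Aᵢ) ≤ p for all i. If e·p·(d+1) ≤ 1, then P(⋂ᵢ Āᵢ) > 0. -/
open MeasureTheory

private lemma exp_aux (d : ℕ) : Real.exp (-1) ≤ (1 - ((d : ℝ) + 1)⁻¹) ^ d := by
  rcases Nat.eq_zero_or_pos d with h | h
  · subst h
    simp only [pow_zero]
    rw [Real.exp_neg]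
    exact inv_le_one_of_one_le₀ (Real.one_le_exp (by norm_num))
  · have hd0 : (0:ℝ) < d := by exact_mod_cast h
    have h1 : (1 + 1/(d:ℝ)) ^ d ≤ Real.exp 1 := by
      calc (1 + 1/(d:ℝ))^d ≤ (Real.exp (1/d))^d := by
            apply pow_le_pow_left₀ (by positivity)
            linarith [Real.add_one_le_exp (1/(d:ℝ))]
        _ = Real.exp 1 := by
            rw [← Real.exp_nat_mul]
            congr 1
            field_simp
    have h2 : (1 - ((d:ℝ)+1)⁻¹) = (1 + 1/(d:ℝ))⁻¹ := by
      rw [inv_eq_iff_eq_inv.symm]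
      field_simp
      ring_nf
      field_simp
    rw [h2, inv_pow, Real.exp_neg]
    exact inv_anti₀ (by positivity) h1

private lemma nu_split {Ω : Type*} [MeasurableSpace Ω] (μ : Measure Ω)
    [IsProbabilityMeasure μ] {B : Set Ω} (hB : MeasurableSet B) (T : Set Ω) :
    (μ T).toReal = (μ (B ∩ T)).toReal + (μ (Bᶜ ∩ T)).toReal := by
  rw [← ENNReal.toReal_add (measure_ne_top μ _) (measure_ne_top μ _)]
  congr 1
  have h := measure_inter_add_diff (μ := μ) T hB
  rw [Set.diff_eq, Set.inter_comm T B, Set.inter_comm T Bᶜ] at h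
  exact h.symm

private lemma lll_key {Ω : Type*} [MeasurableSpace Ω] (μ : Measure Ω)
    [IsProbabilityMeasure μ] {n : ℕ} (A : Fin n → Set Ω)
    (hA : ∀ i, MeasurableSet (A i)) (d : ℕ) (p : ℝ)
    (Γ : Fin n → Finset (Fin n))
    (hΓ : ∀ i, (Γ i).card ≤ d)
    (hindep : ∀ i, ∀ T : Finset (Fin n), (∀ j ∈ T, j ≠ i ∧ j ∉ Γ i) →
      ∀ g : Fin n → Bool,
        μ (A i ∩ ⋂ j ∈ T, (if g j then A j else (A j)ᶜ)) =
          μ (A i) * μ (⋂ j ∈ T, (if g j then A j else (A j)ᶜ)))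
    (hp : ∀ i, (μ (A i)).toReal ≤ p)
    (hcond : Real.exp 1 * p * (d + 1) ≤ 1) :
    ∀ m : ℕ, ∀ S : Finset (Fin n), S.card ≤ m → ∀ i, i ∉ S →
      (μ (A i ∩ ⋂ j ∈ S, (A j)ᶜ)).toReal ≤
        ((d:ℝ)+1)⁻¹ * (μ (⋂ j ∈ S, (A j)ᶜ)).toReal := by
  intro m
  induction m using Nat.strong_induction_on with
  | _ m IH =>
  intro S hScard i hiS
  classical
  set x : ℝ := ((d:ℝ)+1)⁻¹ with hx
  have hx0 : 0 < x := by positivity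
  have hx1 : x ≤ 1 := by
    rw [hx]
    apply inv_le_one_of_one_le₀
    norm_num
  have hp0 : 0 ≤ p := le_trans ENNReal.toReal_nonneg (hp i)
  set S₁ := S.filter (fun j => j ∈ Γ i) with hS₁def
  set S₂ := S.filter (fun j => j ∉ Γ i) with hS₂def
  have hS₁sub : S₁ ⊆ S := Finset.filter_subset _ _
  have hS₂sub : S₂ ⊆ S := Finset.filter_subset _ _
  have hUnion : S₁ ∪ S₂ = S := Finset.filter_union_filter_not_eq _ S
  -- independence for S₂
  have hind2 : μ (A i ∩ ⋂ j ∈ S₂, (A j)ᶜ) = μ (A i) * μ (⋂ j ∈ S₂, (A j)ᶜ) := by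
    have h := hindep i S₂ (fun j hj => ⟨by rintro rfl; exact hiS (hS₂sub hj),
      (Finset.mem_filter.mp hj).2⟩) (fun _ => false)
    simpa using h
  -- numerator bound
  have hnum : (μ (A i ∩ ⋂ j ∈ S, (A j)ᶜ)).toReal ≤ p * (μ (⋂ j ∈ S₂, (A j)ᶜ)).toReal := by
    have hsub : (A i ∩ ⋂ j ∈ S, (A j)ᶜ) ⊆ (A i ∩ ⋂ j ∈ S₂, (A j)ᶜ) := by
      apply Set.inter_subset_inter_right
      intro ω hω
      simp only [Set.mem_iInter] at hω ⊢
      exact fun j hj => hω j (hS₂sub hj)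
    calc (μ (A i ∩ ⋂ j ∈ S, (A j)ᶜ)).toReal
        ≤ (μ (A i ∩ ⋂ j ∈ S₂, (A j)ᶜ)).toReal :=
          ENNReal.toReal_le_toReal (measure_ne_top μ _) (measure_ne_top μ _)
            |>.mpr (measure_mono hsub) |> id
      _ = (μ (A i)).toReal * (μ (⋂ j ∈ S₂, (A j)ᶜ)).toReal := by
          rw [hind2, ENNReal.toReal_mul]
      _ ≤ p * (μ (⋂ j ∈ S₂, (A j)ᶜ)).toReal :=
          mul_le_mul_of_nonneg_right (hp i) ENNReal.toReal_nonneg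
  -- peeling lemma
  have hpeel : ∀ U : Finset (Fin n), U ⊆ S₁ →
      (1 - x) ^ U.card * (μ (⋂ j ∈ S₂, (A j)ᶜ)).toReal ≤
        (μ (⋂ j ∈ U ∪ S₂, (A j)ᶜ)).toReal := by
    intro U
    induction U using Finset.induction_on with
    | empty => simp
    | insert _ _ ha =>
      rename_i a U' IHU
      intro hsub
      have haS₁ : a ∈ S₁ := hsub (Finset.mem_insert_self _ _)
      have haS : a ∈ S := hS₁sub haS₁
      have hU'sub : U' ⊆ S₁ := (Finset.insert_subset_iff.mp hsub).2
      have haΓ : a ∈ Γ i := (Finset.mem_filter.mp haS₁).2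
      have haT : a ∉ U' ∪ S₂ := by
        simp only [Finset.mem_union]
        rintro (h | h)
        · exact ha h
        · exact (Finset.mem_filter.mp h).2 haΓ
      have hTsubS : U' ∪ S₂ ⊆ S :=
        Finset.union_subset (hU'sub.trans hS₁sub) hS₂sub
      have hTcard : (U' ∪ S₂).card < m :=
        lt_of_lt_of_le (Finset.card_lt_card ⟨hTsubS, fun h => haT (h haS)⟩) hScard
      have hkeyT := IH (U' ∪ S₂).card hTcard (U' ∪ S₂) le_rfl a haT
      have hsplit := nu_split μ (hA a) (⋂ j ∈ U' ∪ S₂, (A j)ᶜ)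
      have hrw : (⋂ j ∈ insert a U' ∪ S₂, (A j)ᶜ) = (A a)ᶜ ∩ ⋂ j ∈ U' ∪ S₂, (A j)ᶜ := by
        rw [Finset.insert_union, Finset.set_biInter_insert]
      have hIH' := IHU hU'sub
      rw [hrw, Finset.card_insert_of_notMem ha]
      have hmul : (1 - x) * ((1 - x) ^ U'.card * (μ (⋂ j ∈ S₂, (A j)ᶜ)).toReal) ≤
          (1 - x) * (μ (⋂ j ∈ U' ∪ S₂, (A j)ᶜ)).toReal :=
        mul_le_mul_of_nonneg_left hIH' (by linarith)
      calc (1 - x) ^ (U'.card + 1) * (μ (⋂ j ∈ S₂, (A j)ᶜ)).toReal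
          = (1 - x) * ((1 - x) ^ U'.card * (μ (⋂ j ∈ S₂, (A j)ᶜ)).toReal) := by ring
        _ ≤ (1 - x) * (μ (⋂ j ∈ U' ∪ S₂, (A j)ᶜ)).toReal := hmul
        _ ≤ (μ ((A a)ᶜ ∩ ⋂ j ∈ U' ∪ S₂, (A j)ᶜ)).toReal := by
            rw [hsplit] at hkeyT ⊢
            nlinarith [ENNReal.toReal_nonneg (a := μ (A a ∩ ⋂ j ∈ U' ∪ S₂, (A j)ᶜ)),
              ENNReal.toReal_nonneg (a := μ ((A a)ᶜ ∩ ⋂ j ∈ U' ∪ S₂, (A j)ᶜ))]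
  -- denominator bound
  have hS₁card : S₁.card ≤ d := by
    refine le_trans (Finset.card_le_card ?_) (hΓ i)
    intro j hj
    exact (Finset.mem_filter.mp hj).2
  have hdenom : (1 - x) ^ S₁.card * (μ (⋂ j ∈ S₂, (A j)ᶜ)).toReal ≤
      (μ (⋂ j ∈ S, (A j)ᶜ)).toReal := by
    have := hpeel S₁ (Finset.Subset.refl _)
    rwa [hUnion] at this
  have hpow : (1 - x) ^ d ≤ (1 - x) ^ S₁.card :=
    pow_le_pow_of_le_one (by linarith) (by linarith) hS₁card
  -- p ≤ x * (1-x)^d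
  have hexp : Real.exp (-1) ≤ (1 - x) ^ d := exp_aux d
  have hpe : p ≤ x * Real.exp (-1) := by
    rw [Real.exp_neg]
    rw [hx]
    rw [← one_div, ← one_div, div_mul_div_comm, one_mul]
    rw [le_div_iff₀ (by positivity)]
    calc p * (((d:ℝ)+1) * Real.exp 1) = Real.exp 1 * p * ((d:ℝ)+1) := by ring
      _ ≤ 1 := by exact_mod_cast hcond
  have hpxd : p ≤ x * (1 - x) ^ d := by
    calc p ≤ x * Real.exp (-1) := hpe
      _ ≤ x * (1 - x) ^ d := mul_le_mul_of_nonneg_left hexp hx0.le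
  -- assemble
  have hb0 : (0:ℝ) ≤ (μ (⋂ j ∈ S₂, (A j)ᶜ)).toReal := ENNReal.toReal_nonneg
  calc (μ (A i ∩ ⋂ j ∈ S, (A j)ᶜ)).toReal
      ≤ p * (μ (⋂ j ∈ S₂, (A j)ᶜ)).toReal := hnum
    _ ≤ (x * (1 - x) ^ d) * (μ (⋂ j ∈ S₂, (A j)ᶜ)).toReal :=
        mul_le_mul_of_nonneg_right hpxd hb0
    _ ≤ (x * (1 - x) ^ S₁.card) * (μ (⋂ j ∈ S₂, (A j)ᶜ)).toReal :=
        mul_le_mul_of_nonneg_right (mul_le_mul_of_nonneg_left hpow hx0.le) hb0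
    _ = x * ((1 - x) ^ S₁.card * (μ (⋂ j ∈ S₂, (A j)ᶜ)).toReal) := by ring
    _ ≤ x * (μ (⋂ j ∈ S, (A j)ᶜ)).toReal := mul_le_mul_of_nonneg_left hdenom hx0.le

/-- Lovász Local Lemma, symmetric case: if each event `A i` is mutually independent of
all but at most `d` of the other events, `P(A i) ≤ p` for all `i`, and `e·p·(d+1) ≤ 1`,
then with positive probability none of the events occurs. -/
theorem lovasz_local_lemma {Ω : Type*} [MeasurableSpace Ω] (μ : Measure Ω)
    [IsProbabilityMeasure μ] {n : ℕ} (A : Fin n → Set Ω)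
    (hA : ∀ i, MeasurableSet (A i)) (d : ℕ) (p : ℝ)
    (Γ : Fin n → Finset (Fin n))
    (hΓ : ∀ i, (Γ i).card ≤ d)
    -- `A i` is mutually independent of all events `A j` with `j ≠ i`, `j ∉ Γ i`:
    -- it is independent of every Boolean combination of them.
    (hindep : ∀ i, ∀ T : Finset (Fin n), (∀ j ∈ T, j ≠ i ∧ j ∉ Γ i) →
      ∀ g : Fin n → Bool,
        μ (A i ∩ ⋂ j ∈ T, (if g j then A j else (A j)ᶜ)) =
          μ (A i) * μ (⋂ j ∈ T, (if g j then A j else (A j)ᶜ)))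
    (hp : ∀ i, (μ (A i)).toReal ≤ p)
    (hcond : Real.exp 1 * p * (d + 1) ≤ 1) :
    0 < μ (⋂ i, (A i)ᶜ) := by
  classical
  rcases Nat.eq_zero_or_pos n with hn | hn
  · subst hn
    have : (⋂ i : Fin 0, (A i)ᶜ) = Set.univ := Set.iInter_of_empty _
    rw [this, measure_univ]
    norm_num
  -- n ≥ 1
  have hp0 : 0 ≤ p := le_trans ENNReal.toReal_nonneg (hp ⟨0, hn⟩)
  have he1 : (1:ℝ) < Real.exp 1 := by
    have := Real.exp_one_gt_d9
    linarith
  -- the abstract final induction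
  have final : ∀ c : ℝ, 0 ≤ c → c ≤ 1 →
      (∀ (S : Finset (Fin n)) i, i ∉ S →
        (μ (A i ∩ ⋂ j ∈ S, (A j)ᶜ)).toReal ≤ c * (μ (⋂ j ∈ S, (A j)ᶜ)).toReal) →
      ∀ S : Finset (Fin n), (1 - c) ^ S.card ≤ (μ (⋂ j ∈ S, (A j)ᶜ)).toReal := by
    intro c hc0 hc1 hkey S
    induction S using Finset.induction_on with
    | empty => simp
    | insert _ _ ha =>
      rename_i a S' IH
      have hsplit := nu_split μ (hA a) (⋂ j ∈ S', (A j)ᶜ)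
      have hk := hkey S' a ha
      have hrw : (⋂ j ∈ insert a S', (A j)ᶜ) = (A a)ᶜ ∩ ⋂ j ∈ S', (A j)ᶜ :=
        Finset.set_biInter_insert _ _ _
      rw [hrw, Finset.card_insert_of_notMem ha]
      have hmul : (1 - c) * ((1 - c) ^ S'.card) ≤ (1 - c) * (μ (⋂ j ∈ S', (A j)ᶜ)).toReal :=
        mul_le_mul_of_nonneg_left IH (by linarith)
      calc (1 - c) ^ (S'.card + 1) = (1 - c) * (1 - c) ^ S'.card := by ring
        _ ≤ (1 - c) * (μ (⋂ j ∈ S', (A j)ᶜ)).toReal := hmul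
        _ ≤ (μ ((A a)ᶜ ∩ ⋂ j ∈ S', (A j)ᶜ)).toReal := by
            rw [hsplit] at hk ⊢
            nlinarith [ENNReal.toReal_nonneg (a := μ (A a ∩ ⋂ j ∈ S', (A j)ᶜ)),
              ENNReal.toReal_nonneg (a := μ ((A a)ᶜ ∩ ⋂ j ∈ S', (A j)ᶜ))]
  -- choose c
  obtain ⟨c, hc0, hc1, hkey⟩ : ∃ c : ℝ, 0 ≤ c ∧ c < 1 ∧
      ∀ (S : Finset (Fin n)) i, i ∉ S →
        (μ (A i ∩ ⋂ j ∈ S, (A j)ᶜ)).toReal ≤ c * (μ (⋂ j ∈ S, (A j)ᶜ)).toReal := by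
    rcases Nat.eq_zero_or_pos d with hd | hd
    · -- d = 0 : full independence
      refine ⟨p, hp0, ?_, ?_⟩
      · -- p < 1
        subst hd
        push_cast at hcond
        nlinarith
      · intro S i hiS
        have hΓi : Γ i = ∅ := by
          have := hΓ i
          rw [hd] at this
          exact Finset.card_eq_zero.mp (Nat.le_zero.mp this)
        have h := hindep i S (fun j hj => ⟨by rintro rfl; exact hiS hj,
          by simp [hΓi]⟩) (fun _ => false)
        simp only [Bool.false_eq_true, if_false] at h
        rw [h, ENNReal.toReal_mul]
        exact mul_le_mul_of_nonneg_right (hp i) ENNReal.toReal_nonneg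
    · -- d ≥ 1
      refine ⟨((d:ℝ)+1)⁻¹, by positivity, ?_, ?_⟩
      · rw [inv_lt_one_iff₀]
        right
        have : (1:ℝ) ≤ (d:ℝ) := by exact_mod_cast hd
        linarith
      · intro S i hiS
        exact lll_key μ A hA d p Γ hΓ hindep hp hcond S.card S le_rfl i hiS
  have hfin := final c hc0 hc1.le hkey Finset.univ
  have hpos : 0 < (μ (⋂ j ∈ (Finset.univ : Finset (Fin n)), (A j)ᶜ)).toReal :=
    lt_of_lt_of_le (pow_pos (by linarith) _) hfin
  have hrw : (⋂ i, (A i)ᶜ) = ⋂ j ∈ (Finset.univ : Finset (Fin n)), (A j)ᶜ := by simp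
  rw [hrw]
  exact (ENNReal.toReal_pos_iff.mp hpos).1
end

section
/- For every set S of k distinct integers in {1,…,2^n} (with n large enough) there exists a prime q ≤ k² n such that the map x ↦ x mod q is injective on S. -/
open Finset

private lemma aux_pow16 : ∀ i : ℕ, 8 ≤ i → 16 * i + 24 ≤ 2 ^ i := by
  intro i hi
  induction i with
  | zero => omega
  | succ j ih =>
    rcases Nat.lt_or_ge j 8 with hj | hj
    · have hj7 : j = 7 := by omega
      subst hj7; norm_num
    · have h1 := ih (by omega)
      have h2 : (16 : ℕ) ≤ 2 ^ j := by
        calc (16 : ℕ) = 2 ^ 4 := by norm_num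
        _ ≤ 2 ^ j := Nat.pow_le_pow_right (by norm_num) (by omega)
      have : 2 ^ (j + 1) = 2 ^ j + 2 ^ j := by ring
      omega

private lemma aux_log_le_sqrt {K : ℕ} (hK : 2 ^ 16 ≤ K) :
    8 * (Nat.log 2 K + 2) ≤ Nat.sqrt K := by
  set j := Nat.log 2 K with hj
  have hj16 : 16 ≤ j := by
    have h := Nat.log_mono_right (b := 2) hK
    rwa [Nat.log_pow (by norm_num)] at h
  have hpow : 2 ^ j ≤ K := Nat.pow_log_le_self 2 (by positivity)
  have hsq : 2 ^ (j / 2) ≤ Nat.sqrt K := by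
    rw [Nat.le_sqrt]
    calc 2 ^ (j / 2) * 2 ^ (j / 2) = 2 ^ (j / 2 + j / 2) := by rw [pow_add]
    _ ≤ 2 ^ j := Nat.pow_le_pow_right (by norm_num) (by omega)
    _ ≤ K := hpow
  have h16 : 16 * (j / 2) + 24 ≤ 2 ^ (j / 2) := aux_pow16 _ (by omega)
  omega

private lemma aux_pow_sqrt_le {K : ℕ} (hK : 2 ^ 16 ≤ K) :
    K ^ (Nat.sqrt K + 1) ≤ 2 ^ (K / 4) := by
  set L := Nat.log 2 K with hL
  set s := Nat.sqrt K with hs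
  have hKlt : K < 2 ^ (L + 1) := Nat.lt_pow_succ_log_self (by norm_num) K
  have h8 : 8 * (L + 2) ≤ s := aux_log_le_sqrt hK
  have hss : s * s ≤ K := Nat.sqrt_le K
  have hsK : s ≤ K := Nat.sqrt_le_self K
  have hkey : (L + 1) * (s + 1) ≤ K / 4 := by
    rw [Nat.le_div_iff_mul_le (by norm_num)]
    nlinarith
  calc K ^ (s + 1) ≤ (2 ^ (L + 1)) ^ (s + 1) := Nat.pow_le_pow_left hKlt.le _
  _ = 2 ^ ((L + 1) * (s + 1)) := by rw [← pow_mul]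
  _ ≤ 2 ^ (K / 4) := Nat.pow_le_pow_right (by norm_num) hkey

private lemma aux_centralBinom_le (m : ℕ) (hm : 4 ≤ m) :
    4 ^ m ≤ (2 * m) ^ (Nat.sqrt (2 * m) + 1) * primorial (2 * m) := by
  have hm0 : 0 < 2 * m := by omega
  set C := Nat.centralBinom m with hC
  have hCne : C ≠ 0 := Nat.centralBinom_ne_zero m
  set S : Finset ℕ := (range (2 * m + 1)).filter Nat.Prime with hS
  have hCeq : C = ∏ p ∈ S, p ^ C.factorization p := by
    conv_lhs => rw [← Nat.factorization_prod_pow_eq_self hCne]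
    apply Finsupp.prod_of_support_subset
    · intro p hp
      have hp' : p ∈ C.primeFactors := by
        rwa [Nat.support_factorization] at hp
      have hpp : p.Prime := Nat.prime_of_mem_primeFactors hp'
      have hple : p ≤ 2 * m := by
        by_contra h
        have hzero : C.factorization p = 0 := by
          rw [hC, Nat.centralBinom]
          exact Nat.factorization_choose_eq_zero_of_lt (by omega)
        exact Finsupp.mem_support_iff.mp hp hzero
      simp [hS, Finset.mem_filter, Nat.lt_succ_iff, hple, hpp]
    · intro p _
      exact pow_zero p
  set s := Nat.sqrt (2 * m) with hs
  have hsplit : C = (∏ p ∈ S.filter (fun p => p ≤ s), p ^ C.factorization p) *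
      ∏ p ∈ S.filter (fun p => ¬ p ≤ s), p ^ C.factorization p := by
    conv_lhs => rw [hCeq]
    exact (Finset.prod_filter_mul_prod_filter_not S _ _).symm
  have h1 : (∏ p ∈ S.filter (fun p => p ≤ s), p ^ C.factorization p) ≤ (2 * m) ^ s := by
    calc (∏ p ∈ S.filter (fun p => p ≤ s), p ^ C.factorization p)
        ≤ ∏ _p ∈ S.filter (fun p => p ≤ s), (2 * m) := by
          apply Finset.prod_le_prod'
          intro p _
          exact Nat.pow_factorization_choose_le hm0
    _ = (2 * m) ^ (S.filter (fun p => p ≤ s)).card := by rw [Finset.prod_const]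
    _ ≤ (2 * m) ^ s := by
        apply Nat.pow_le_pow_right hm0
        have hsub : S.filter (fun p => p ≤ s) ⊆ Finset.Ico 2 (s + 1) := by
          intro p hp
          simp only [hS, Finset.mem_filter, Finset.mem_range] at hp
          have := hp.1.2.two_le
          simp only [Finset.mem_Ico]
          omega
        calc (S.filter (fun p => p ≤ s)).card ≤ (Finset.Ico 2 (s + 1)).card :=
              Finset.card_le_card hsub
        _ = s + 1 - 2 := Nat.card_Ico _ _
        _ ≤ s := by omega
  have h2 : (∏ p ∈ S.filter (fun p => ¬ p ≤ s), p ^ C.factorization p) ≤ primorial (2 * m) := by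
    calc (∏ p ∈ S.filter (fun p => ¬ p ≤ s), p ^ C.factorization p)
        ≤ ∏ p ∈ S.filter (fun p => ¬ p ≤ s), p := by
          apply Finset.prod_le_prod'
          intro p hp
          simp only [Finset.mem_filter, not_le] at hp
          have hfac : C.factorization p ≤ 1 := by
            rw [hC, Nat.centralBinom]
            exact Nat.factorization_choose_le_one (Nat.sqrt_lt'.mp hp.2)
          have hp2 : 2 ≤ p := (Finset.mem_filter.mp hp.1).2.two_le
          calc p ^ C.factorization p ≤ p ^ 1 := Nat.pow_le_pow_right (by omega) hfac
          _ = p := pow_one p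
    _ ≤ ∏ p ∈ S, p := by
          apply Finset.prod_le_prod_of_subset_of_one_le' (Finset.filter_subset _ _)
          intro p hp _
          exact (Finset.mem_filter.mp hp).2.one_lt.le
    _ = primorial (2 * m) := by rw [primorial]
  have h4 : 4 ^ m < m * C := Nat.four_pow_lt_mul_centralBinom m hm
  calc 4 ^ m ≤ m * C := h4.le
  _ = m * ((∏ p ∈ S.filter (fun p => p ≤ s), p ^ C.factorization p) *
      ∏ p ∈ S.filter (fun p => ¬ p ≤ s), p ^ C.factorization p) := by rw [← hsplit]
  _ ≤ (2 * m) * ((2 * m) ^ s * primorial (2 * m)) := by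
      apply Nat.mul_le_mul (by omega)
      exact Nat.mul_le_mul h1 h2
  _ = (2 * m) ^ (s + 1) * primorial (2 * m) := by ring
  _ = (2 * m) ^ (Nat.sqrt (2 * m) + 1) * primorial (2 * m) := by rw [hs]

private lemma primorial_mono' : Monotone primorial := by
  intro a b hab
  apply Finset.prod_le_prod_of_subset_of_one_le'
  · exact Finset.filter_subset_filter _ (Finset.range_subset_range.mpr (by omega))
  · intro p hp _
    exact (Finset.mem_filter.mp hp).2.one_lt.le

private lemma aux_primorial_lower {N : ℕ} (hN : 2 ^ 17 ≤ N) :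
    2 ^ (2 * N / 3) ≤ primorial N := by
  set m := N / 2 with hm
  have hm16 : 2 ^ 16 ≤ m := by omega
  have hK : 2 ^ 16 ≤ 2 * m := by omega
  have hB0 := aux_centralBinom_le m (by omega)
  have hexp := aux_pow_sqrt_le hK
  have hchain : 2 ^ (2 * m) ≤ 2 ^ (2 * m / 4) * primorial (2 * m) := by
    calc 2 ^ (2 * m) = 4 ^ m := by rw [show (4 : ℕ) = 2 ^ 2 by norm_num, ← pow_mul]
    _ ≤ (2 * m) ^ (Nat.sqrt (2 * m) + 1) * primorial (2 * m) := hB0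
    _ ≤ 2 ^ (2 * m / 4) * primorial (2 * m) := Nat.mul_le_mul hexp (le_refl _)
  have hsplit : 2 ^ (2 * m) = 2 ^ (2 * m / 4) * 2 ^ (2 * m - 2 * m / 4) := by
    rw [← pow_add]; congr 1; omega
  have hlower : 2 ^ (2 * m - 2 * m / 4) ≤ primorial (2 * m) := by
    have hpos : 0 < 2 ^ (2 * m / 4) := Nat.pow_pos (by norm_num)
    rw [hsplit] at hchain
    exact Nat.le_of_mul_le_mul_left hchain hpos
  have hexp2 : 2 * N / 3 ≤ 2 * m - 2 * m / 4 := by omega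
  calc 2 ^ (2 * N / 3) ≤ 2 ^ (2 * m - 2 * m / 4) := Nat.pow_le_pow_right (by norm_num) hexp2
  _ ≤ primorial (2 * m) := hlower
  _ ≤ primorial N := primorial_mono' (by omega)

/-- For every set of `k` distinct integers in `{1,…,2^n}` (with `n` large enough) there is a
prime `q ≤ k² n` such that `x ↦ x mod q` is injective on the set. -/
theorem exists_small_prime_hash (k : ℕ) (hk : 1 ≤ k) :
    ∃ n₀ : ℕ, ∀ n ≥ n₀, ∀ x : Fin k → ℕ, Function.Injective x →
      (∀ i, 1 ≤ x i ∧ x i ≤ 2 ^ n) →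
      ∃ q : ℕ, q.Prime ∧ q ≤ k ^ 2 * n ∧ Function.Injective fun i => x i % q := by
  refine ⟨2 ^ 17, fun n hn x hinj hbd => ?_⟩
  set N := k ^ 2 * n with hN
  have hNn : n ≤ N := by
    calc n = 1 * n := (one_mul n).symm
    _ ≤ k ^ 2 * n := Nat.mul_le_mul (by nlinarith) (le_refl n)
  have hN17 : 2 ^ 17 ≤ N := le_trans hn hNn
  -- the product of all pairwise differences
  set t : ℕ := ∏ j : Fin k, ∏ i ∈ Finset.Iio j, ((x j : ℤ) - (x i : ℤ)).natAbs with ht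
  have hfac_pos : ∀ j : Fin k, ∀ i ∈ Finset.Iio j, 0 < ((x j : ℤ) - (x i : ℤ)).natAbs := by
    intro j i hi
    have hij : i ≠ j := by
      intro h; subst h; simp at hi
    have : x i ≠ x j := fun h => hij (hinj h)
    omega
  have ht_pos : 0 < t := by
    apply Finset.prod_pos
    intro j _
    exact Finset.prod_pos (hfac_pos j)
  set C : ℕ := ∑ j : Fin k, (j : ℕ) with hC
  have hfac_le : ∀ j : Fin k, ∀ i ∈ Finset.Iio j, ((x j : ℤ) - (x i : ℤ)).natAbs ≤ 2 ^ n := by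
    intro j i _
    have h1 := hbd i
    have h2 := hbd j
    omega
  have ht_le : t ≤ 2 ^ (n * C) := by
    calc t ≤ ∏ j : Fin k, ∏ _i ∈ Finset.Iio j, 2 ^ n := by
          apply Finset.prod_le_prod'
          intro j _
          exact Finset.prod_le_prod' (hfac_le j)
    _ = ∏ j : Fin k, (2 ^ n) ^ (Finset.Iio j).card := by
          apply Finset.prod_congr rfl
          intro j _
          rw [Finset.prod_const]
    _ = ∏ j : Fin k, (2 ^ n) ^ (j : ℕ) := by
          apply Finset.prod_congr rfl
          intro j _
          rw [Fin.card_Iio]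
    _ = (2 ^ n) ^ C := Finset.prod_pow_eq_pow_sum _ _ _
    _ = 2 ^ (n * C) := by rw [← pow_mul]
  have hC2 : C * 2 = k * (k - 1) := by
    rw [hC, Fin.sum_univ_eq_sum_range (fun i => i) k]
    exact Finset.sum_range_id_mul_two k
  have hCexp : n * C < 2 * N / 3 := by
    have hn1 : 12 ≤ n := by
      calc (12 : ℕ) ≤ 2 ^ 17 := by norm_num
      _ ≤ n := hn
    obtain ⟨k', hk'⟩ : ∃ k', k = k' + 1 := ⟨k - 1, by omega⟩
    have hC2' : C * 2 = (k' + 1) * k' := by rw [hC2, hk']; simp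
    have hkey : 3 * (n * C) + 5 ≤ 2 * N := by
      rw [hN, hk']
      nlinarith [hC2', hn1]
    omega
  have hprime : ∃ q ∈ (range (N + 1)).filter Nat.Prime, ¬ q ∣ t := by
    by_contra h
    push_neg at h
    have hdvd : primorial N ∣ t := by
      rw [primorial]
      exact Finset.prod_primes_dvd t
        (fun p hp => (Finset.mem_filter.mp hp).2.prime) h
    have hle : primorial N ≤ t := Nat.le_of_dvd ht_pos hdvd
    have hgt : t < primorial N := by
      calc t ≤ 2 ^ (n * C) := ht_le
      _ < 2 ^ (2 * N / 3) := Nat.pow_lt_pow_right (by norm_num) hCexp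
      _ ≤ primorial N := aux_primorial_lower hN17
    omega
  obtain ⟨q, hqmem, hqndvd⟩ := hprime
  obtain ⟨hqrange, hqprime⟩ := Finset.mem_filter.mp hqmem
  refine ⟨q, hqprime, by simpa using Nat.lt_succ_iff.mp (Finset.mem_range.mp hqrange), ?_⟩
  intro i j hmod
  by_contra hne
  simp only at hmod
  have hdvd_int : (q : ℤ) ∣ ((x j : ℤ) - (x i : ℤ)) := by
    have : x i ≡ x j [MOD q] := hmod
    exact (Nat.modEq_iff_dvd.mp this)
  have hq_dvd_fac : ∀ a b : Fin k, a < b → ((x b : ℤ) - (x a : ℤ)).natAbs ∣ t := by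
    intro a b hab
    rw [ht]
    have h1 : ((x b : ℤ) - (x a : ℤ)).natAbs ∣
        ∏ i ∈ Finset.Iio b, ((x b : ℤ) - (x i : ℤ)).natAbs :=
      Finset.dvd_prod_of_mem (fun i => ((x b : ℤ) - (x i : ℤ)).natAbs) (Finset.mem_Iio.mpr hab)
    have h2 : (∏ i ∈ Finset.Iio b, ((x b : ℤ) - (x i : ℤ)).natAbs) ∣
        ∏ j : Fin k, ∏ i ∈ Finset.Iio j, ((x j : ℤ) - (x i : ℤ)).natAbs :=
      Finset.dvd_prod_of_mem (fun j => ∏ i ∈ Finset.Iio j, ((x j : ℤ) - (x i : ℤ)).natAbs)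
        (Finset.mem_univ b)
    exact dvd_trans h1 h2
  have hq_dvd_nat : q ∣ ((x j : ℤ) - (x i : ℤ)).natAbs := by
    have := Int.natAbs_dvd_natAbs.mpr hdvd_int
    simpa using this
  rcases lt_trichotomy i j with hij | hij | hij
  · exact hqndvd (dvd_trans hq_dvd_nat (hq_dvd_fac i j hij))
  · exact hne hij
  · have hsymm : ((x j : ℤ) - (x i : ℤ)).natAbs = ((x i : ℤ) - (x j : ℤ)).natAbs := by
      omega
    rw [hsymm] at hq_dvd_nat
    exact hqndvd (dvd_trans hq_dvd_nat (hq_dvd_fac j i hij))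
end

section
/- Suppose X, Y ∈ {0,1}^n differ in at most αn positions with α ≤ 1/2, and π is drawn from a pairwise independent family of permutations of the positions. Partition the permuted strings into m = n/k consecutive blocks of length k. Call a block dangerous if the permuted strings differ in at least (α+δ)k positions within it. Then for sufficiently large n, Pr[a fixed block is dangerous] ≤ 1/(2δ²k), and the probability that the number of dangerous blocks is at least s/2 is at most n/(s·k²·δ²). -/
open scoped Classical

lemma dangerous_aux (N K M R : ℝ) (hN : 2 ≤ N) (hK : 1 ≤ K) (hKN : K ≤ N)
    (hM : 0 < M) (hR0 : 0 ≤ R) (hRN : R ≤ N) :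
    K*(R*M/N) + K*(K-1)*(R*(R-1)*M/(N*(N-1))) - 2*(K*R/N)*(K*(R*M/N)) + M*(K*R/N)^2
      ≤ M*K/4 := by
  have hN0 : (0:ℝ) < N := by linarith
  have hN1 : (0:ℝ) < N - 1 := by linarith
  have hK0 : (0:ℝ) < K := by linarith
  have expand : K*(R*M/N) + K*(K-1)*(R*(R-1)*M/(N*(N-1))) - 2*(K*R/N)*(K*(R*M/N)) + M*(K*R/N)^2
      = M*K*(R*(N-R)*(N-K))/(N^2*(N-1)) := by
    field_simp
    ring
  rw [expand, div_le_iff₀ (by positivity)]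
  have h1 : 4*(R*(N-R)) ≤ N^2 := by nlinarith [sq_nonneg (N - 2*R)]
  have h2 : (0:ℝ) ≤ N - K := by linarith
  have h3 : N - K ≤ N - 1 := by linarith
  have h4 : 4*(R*(N-R))*(N-K) ≤ N^2*(N-K) := mul_le_mul_of_nonneg_right h1 h2
  have h5 : N^2*(N-K) ≤ N^2*(N-1) := mul_le_mul_of_nonneg_left h3 (by positivity)
  have h6 : 4*(R*(N-R))*(N-K) ≤ N^2*(N-1) := h4.trans h5
  nlinarith [mul_le_mul_of_nonneg_left h6 (by positivity : (0:ℝ) ≤ M*K/4)]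

set_option maxHeartbeats 4000000 in
/-- If `X, Y ∈ {0,1}^n` differ in at most `αn` positions (`α ≤ 1/2`) and `π` is drawn from a
pairwise independent family of permutations of the positions, partition the permuted strings
into `m = n/k` blocks of length `k`; a block is dangerous if the permuted strings differ in at
least `(α+δ)k` of its positions. Then for sufficiently large `n`, the probability that a
fixed block is dangerous is at most `1/(2δ²k)`, and the probability that there are at least
`s/2` dangerous blocks is at most `n/(s k² δ²)`. -/
theorem dangerous_blocks_bound (α δ : ℝ) (hα0 : 0 ≤ α) (hα : α ≤ 1/2) (hδ : 0 < δ)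
    (k : ℕ) (hk : 0 < k) :
    ∃ n₀ : ℕ, ∀ n, n₀ ≤ n → k ∣ n →
      ∀ {ι : Type} [Fintype ι] [Nonempty ι] (F : ι → Equiv.Perm (Fin n)),
      (∀ i x : Fin n,
        ((Finset.univ.filter fun σ => F σ i = x).card : ℝ) / Fintype.card ι = 1 / n) →
      (∀ i j x y : Fin n, i ≠ j → x ≠ y →
        ((Finset.univ.filter fun σ => F σ i = x ∧ F σ j = y).card : ℝ) / Fintype.card ι =
          1 / (n * (n - 1))) →
      ∀ X Y : Fin n → Bool, (hammingDist X Y : ℝ) ≤ α * n →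
      (∀ l < n / k,
        ((Finset.univ.filter fun σ : ι =>
            (α + δ) * k ≤ ((Finset.univ.filter fun j : Fin n =>
              l * k ≤ (j : ℕ) ∧ (j : ℕ) < (l + 1) * k ∧
                X (F σ j) ≠ Y (F σ j)).card : ℝ)).card : ℝ) / Fintype.card ι ≤
          1 / (2 * δ ^ 2 * k)) ∧
      (∀ s : ℕ, 0 < s →
        ((Finset.univ.filter fun σ : ι =>
            (s : ℝ) / 2 ≤ (((Finset.range (n / k)).filter fun l =>
              (α + δ) * k ≤ ((Finset.univ.filter fun j : Fin n =>
                l * k ≤ (j : ℕ) ∧ (j : ℕ) < (l + 1) * k ∧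
                  X (F σ j) ≠ Y (F σ j)).card : ℝ)).card : ℝ)).card : ℝ) /
          Fintype.card ι ≤ n / (s * k ^ 2 * δ ^ 2)) := by
  refine ⟨2, ?_⟩
  intro n hn hdvd ι _ _ F h1 h2 X Y hXY
  have hn0 : 0 < n := lt_of_lt_of_le (by norm_num) hn
  have hkn : k ≤ n := Nat.le_of_dvd hn0 hdvd
  have hK1 : (1:ℝ) ≤ (k:ℝ) := by exact_mod_cast hk
  have hKpos : (0:ℝ) < (k:ℝ) := by exact_mod_cast hk
  have hKN : (k:ℝ) ≤ (n:ℝ) := by exact_mod_cast hkn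
  have hN2 : (2:ℝ) ≤ (n:ℝ) := by exact_mod_cast hn
  have hNpos : (0:ℝ) < (n:ℝ) := by linarith
  have hN1pos : (0:ℝ) < (n:ℝ) - 1 := by linarith
  have hMpos : (0:ℝ) < (Fintype.card ι : ℝ) := by
    exact_mod_cast Fintype.card_pos
  set M : ℝ := (Fintype.card ι : ℝ) with hM
  set R : ℝ := (hammingDist X Y : ℝ) with hRdef
  have hR0 : (0:ℝ) ≤ R := Nat.cast_nonneg _
  have hRα : R ≤ α * n := hXY
  have hRN : R ≤ (n:ℝ) := by nlinarith
  set D : Finset (Fin n) := Finset.univ.filter (fun p => X p ≠ Y p) with hDdef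
  have hDcard : (D.card : ℝ) = R := by rw [hRdef]; norm_cast
  set f : ι → Fin n → ℝ := fun σ j => if X (F σ j) ≠ Y (F σ j) then 1 else 0 with hf
  -- first moment
  have hA : ∀ j : Fin n, ∑ σ : ι, f σ j = R * M / ↑n := by
    intro j
    have step : ∀ σ : ι, f σ j = ∑ x ∈ D, if F σ j = x then (1:ℝ) else 0 := by
      intro σ
      rw [Finset.sum_ite_eq D (F σ j) (fun _ => (1:ℝ))]
      simp [hf, hDdef]
    rw [Finset.sum_congr rfl (fun σ _ => step σ), Finset.sum_comm]
    have each : ∀ x ∈ D, (∑ σ : ι, if F σ j = x then (1:ℝ) else 0) = M / ↑n := by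
      intro x _
      rw [Finset.sum_boole]
      have h := h1 j x
      rw [div_eq_div_iff hMpos.ne' hNpos.ne'] at h
      rw [eq_div_iff hNpos.ne']
      linarith
    rw [Finset.sum_congr rfl each, Finset.sum_const, nsmul_eq_mul, hDcard]
    ring
  -- second moment
  have hB : ∀ j j' : Fin n, j ≠ j' →
      ∑ σ : ι, f σ j * f σ j' = R * (R - 1) * M / (↑n * (↑n - 1)) := by
    intro j j' hjj
    have step : ∀ σ : ι, f σ j * f σ j'
        = ∑ x ∈ D, ∑ y ∈ D, if F σ j = x ∧ F σ j' = y then (1:ℝ) else 0 := by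
      intro σ
      have e1 : f σ j = ∑ x ∈ D, if F σ j = x then (1:ℝ) else 0 := by
        rw [Finset.sum_ite_eq D (F σ j) (fun _ => (1:ℝ))]; simp [hf, hDdef]
      have e2 : f σ j' = ∑ y ∈ D, if F σ j' = y then (1:ℝ) else 0 := by
        rw [Finset.sum_ite_eq D (F σ j') (fun _ => (1:ℝ))]; simp [hf, hDdef]
      rw [e1, e2, Finset.sum_mul_sum]
      refine Finset.sum_congr rfl fun x _ => Finset.sum_congr rfl fun y _ => ?_
      by_cases p : F σ j = x <;> by_cases q : F σ j' = y <;> simp [p, q]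
    rw [Finset.sum_congr rfl (fun σ _ => step σ), Finset.sum_comm]
    have inner : ∀ x ∈ D,
        (∑ σ : ι, ∑ y ∈ D, if F σ j = x ∧ F σ j' = y then (1:ℝ) else 0)
          = (R - 1) * (M / (↑n * (↑n - 1))) := by
      intro x hx
      rw [Finset.sum_comm]
      have each : ∀ y ∈ D, (∑ σ : ι, if F σ j = x ∧ F σ j' = y then (1:ℝ) else 0)
          = if y = x then 0 else M / (↑n * (↑n - 1)) := by
        intro y _
        rw [Finset.sum_boole]
        by_cases hyx : y = x
        · simp only [hyx, if_true]
          norm_cast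
          rw [Finset.card_eq_zero, Finset.filter_eq_empty_iff]
          rintro σ - ⟨e1, e2⟩
          exact hjj ((F σ).injective (e1.trans e2.symm))
        · simp only [hyx, if_false]
          have h := h2 j j' x y hjj (Ne.symm hyx)
          rw [div_eq_div_iff hMpos.ne' (by positivity)] at h
          rw [eq_div_iff (by positivity : ((n:ℝ) * (↑n - 1)) ≠ 0)]
          linarith
      rw [Finset.sum_congr rfl each]
      have split : ∀ z ∈ D, (if z = x then (0:ℝ) else M / (↑n * (↑n - 1)))
          = M / (↑n * (↑n - 1)) - (if z = x then M / (↑n * (↑n - 1)) else 0) := by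
        intro z _
        by_cases h : z = x <;> simp [h]
      rw [Finset.sum_congr rfl split, Finset.sum_sub_distrib, Finset.sum_const,
        Finset.sum_ite_eq' D x (fun _ => M / (↑n * (↑n - 1))), if_pos hx, nsmul_eq_mul, hDcard]
      ring
    rw [Finset.sum_congr rfl inner, Finset.sum_const, nsmul_eq_mul, hDcard]
    ring
  -- key per-block bound
  have key : ∀ l, l < n / k →
      ((Finset.univ.filter fun σ : ι =>
        (α + δ) * ↑k ≤ ((Finset.univ.filter fun j : Fin n =>
          l * k ≤ (j : ℕ) ∧ (j : ℕ) < (l + 1) * k ∧ X (F σ j) ≠ Y (F σ j)).card : ℝ)).card : ℝ) * (2 * δ^2 * ↑k) ≤ M := by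
    intro l hl
    have hbn : (l + 1) * k ≤ n := by
      calc (l+1)*k ≤ (n/k)*k := Nat.mul_le_mul_right k hl
        _ = n := Nat.div_mul_cancel hdvd
    set B : Finset (Fin n) :=
      Finset.univ.filter (fun j : Fin n => l * k ≤ (j:ℕ) ∧ (j:ℕ) < (l+1)*k) with hBdef
    have hBcard : B.card = k := by
      have e : B.card = (Finset.Ico (l*k) ((l+1)*k)).card := by
        refine Finset.card_bij' (fun j _ => (j : ℕ))
          (fun x hx => (⟨x, lt_of_lt_of_le (Finset.mem_Ico.1 hx).2 hbn⟩ : Fin n))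
          ?_ ?_ ?_ ?_
        · intro a ha
          exact Finset.mem_Ico.2 (Finset.mem_filter.1 ha).2
        · intro x hx
          exact Finset.mem_filter.2 ⟨Finset.mem_univ _, (Finset.mem_Ico.1 hx)⟩
        · intro a ha; rfl
        · intro x hx; rfl
      rw [e, Nat.card_Ico, Nat.add_mul, one_mul, Nat.add_sub_cancel_left]
    set Φ : ι → ℝ := fun σ => ∑ j ∈ B, f σ j with hΦdef
    have hΦ : ∀ σ : ι, ((Finset.univ.filter fun j : Fin n =>
        l * k ≤ (j : ℕ) ∧ (j : ℕ) < (l + 1) * k ∧ X (F σ j) ≠ Y (F σ j)).card : ℝ) = Φ σ := by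
      intro σ
      have e : B.filter (fun j => X (F σ j) ≠ Y (F σ j))
          = Finset.univ.filter (fun j : Fin n =>
              l * k ≤ (j : ℕ) ∧ (j : ℕ) < (l + 1) * k ∧ X (F σ j) ≠ Y (F σ j)) := by
        rw [hBdef, Finset.filter_filter]
        exact Finset.filter_congr fun j _ => by tauto
      rw [← e, Finset.card_filter]
      push_cast
      exact Finset.sum_congr rfl fun j _ => by
        by_cases hc : X (F σ j) = Y (F σ j) <;> simp [hf, hc]
    have hS1 : ∑ σ : ι, Φ σ = ↑k * (R * M / ↑n) := by
      calc ∑ σ : ι, Φ σ = ∑ j ∈ B, ∑ σ : ι, f σ j := Finset.sum_comm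
        _ = ∑ _j ∈ B, R * M / ↑n := Finset.sum_congr rfl (fun j _ => hA j)
        _ = ↑k * (R * M / ↑n) := by rw [Finset.sum_const, hBcard, nsmul_eq_mul]
    have hS2 : ∑ σ : ι, Φ σ * Φ σ
        = ↑k * (R * M / ↑n) + ↑k * (↑k - 1) * (R * (R - 1) * M / (↑n * (↑n - 1))) := by
      have e1 : ∀ σ : ι, Φ σ * Φ σ = ∑ j ∈ B, ∑ j' ∈ B, f σ j * f σ j' :=
        fun σ => Finset.sum_mul_sum B B _ _
      rw [Finset.sum_congr rfl (fun σ _ => e1 σ), Finset.sum_comm]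
      have e2 : ∀ j ∈ B, (∑ σ : ι, ∑ j' ∈ B, f σ j * f σ j')
          = ∑ j' ∈ B, ∑ σ : ι, f σ j * f σ j' := fun j _ => Finset.sum_comm
      rw [Finset.sum_congr rfl e2]
      have e3 : ∀ j ∈ B, ∀ j' ∈ B, (∑ σ : ι, f σ j * f σ j')
          = if j' = j then R * M / ↑n else R * (R - 1) * M / (↑n * (↑n - 1)) := by
        intro j _ j' _
        by_cases h : j' = j
        · subst h
          rw [if_pos rfl]
          have e : ∀ σ : ι, f σ j' * f σ j' = f σ j' := by
            intro σ; by_cases hc : X ((F σ) j') = Y ((F σ) j') <;> simp [hf, hc]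
          rw [Finset.sum_congr rfl (fun σ _ => e σ)]
          exact hA j'
        · rw [if_neg h]
          exact hB j j' (Ne.symm h)
      rw [Finset.sum_congr rfl (fun j hj => Finset.sum_congr rfl (fun j' hj' => e3 j hj j' hj'))]
      have e4 : ∀ j ∈ B, (∑ j' ∈ B, if j' = j then R * M / ↑n
            else R * (R - 1) * M / (↑n * (↑n - 1)))
          = R * M / ↑n + (↑k - 1) * (R * (R - 1) * M / (↑n * (↑n - 1))) := by
        intro j hj
        have split : ∀ z ∈ B, (if z = j then R * M / ↑n else R*(R-1)*M/(↑n*(↑n-1)))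
            = R*(R-1)*M/(↑n*(↑n-1)) + (if z = j then R*M/↑n - R*(R-1)*M/(↑n*(↑n-1)) else 0) := by
          intro z _; by_cases hc : z = j <;> simp [hc]
        rw [Finset.sum_congr rfl split, Finset.sum_add_distrib, Finset.sum_const, hBcard,
          Finset.sum_ite_eq' B j (fun _ => R*M/↑n - R*(R-1)*M/(↑n*(↑n-1))), if_pos hj,
          nsmul_eq_mul]
        ring
      rw [Finset.sum_congr rfl e4, Finset.sum_const, hBcard, nsmul_eq_mul]
      ring
    set μ : ℝ := ↑k * R / ↑n with hμdef
    have hμα : μ ≤ α * ↑k := by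
      rw [hμdef, div_le_iff₀ hNpos]
      nlinarith
    have hVarEq : ∑ σ : ι, (Φ σ - μ)^2
        = (∑ σ : ι, Φ σ * Φ σ) - 2*μ*(∑ σ : ι, Φ σ) + M * μ^2 := by
      have e : ∀ σ : ι, (Φ σ - μ)^2 = Φ σ * Φ σ - 2*μ*Φ σ + μ^2 := fun σ => by ring
      rw [Finset.sum_congr rfl (fun σ _ => e σ), Finset.sum_add_distrib,
        Finset.sum_sub_distrib, ← Finset.mul_sum, Finset.sum_const, Finset.card_univ,
        nsmul_eq_mul, hM]
    have hVar : ∑ σ : ι, (Φ σ - μ)^2 ≤ M * ↑k / 4 := by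
      rw [hVarEq, hS1, hS2, hμdef]
      exact dangerous_aux ↑n ↑k M R hN2 hK1 hKN hMpos hR0 hRN
    have hmem : ∀ σ ∈ (Finset.univ.filter fun σ : ι =>
        (α + δ) * ↑k ≤ ((Finset.univ.filter fun j : Fin n =>
          l * k ≤ (j : ℕ) ∧ (j : ℕ) < (l + 1) * k ∧ X (F σ j) ≠ Y (F σ j)).card : ℝ)),
        δ^2*(k:ℝ)^2 ≤ (Φ σ - μ)^2 := by
      intro σ hσ
      have hc := (Finset.mem_filter.1 hσ).2
      rw [hΦ σ] at hc
      have h1' : δ*↑k ≤ Φ σ - μ := by linarith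
      nlinarith [mul_pos hδ hKpos]
    have cheb : (((Finset.univ.filter fun σ : ι =>
        (α + δ) * ↑k ≤ ((Finset.univ.filter fun j : Fin n =>
          l * k ≤ (j : ℕ) ∧ (j : ℕ) < (l + 1) * k ∧ X (F σ j) ≠ Y (F σ j)).card : ℝ)).card : ℝ)) * (δ^2*(k:ℝ)^2)
        ≤ M * ↑k / 4 := by
      have e1 : (((Finset.univ.filter fun σ : ι =>
        (α + δ) * ↑k ≤ ((Finset.univ.filter fun j : Fin n =>
          l * k ≤ (j : ℕ) ∧ (j : ℕ) < (l + 1) * k ∧ X (F σ j) ≠ Y (F σ j)).card : ℝ)).card : ℝ)) * (δ^2*(k:ℝ)^2)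
          = ∑ _σ ∈ (Finset.univ.filter fun σ : ι =>
        (α + δ) * ↑k ≤ ((Finset.univ.filter fun j : Fin n =>
          l * k ≤ (j : ℕ) ∧ (j : ℕ) < (l + 1) * k ∧ X (F σ j) ≠ Y (F σ j)).card : ℝ)), δ^2*(k:ℝ)^2 := by
        rw [Finset.sum_const, nsmul_eq_mul]
      rw [e1]
      refine le_trans (Finset.sum_le_sum hmem) (le_trans ?_ hVar)
      exact Finset.sum_le_sum_of_subset_of_nonneg (Finset.subset_univ _)
        (fun σ _ _ => sq_nonneg _)
    have final : ∀ c : ℝ, c * (δ^2*(k:ℝ)^2) ≤ M * ↑k / 4 → c * (2*δ^2*↑k) ≤ M := by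
      intro c hc
      refine le_of_mul_le_mul_right ?_ hKpos
      nlinarith [hc, mul_pos hMpos hKpos]
    exact final _ cheb
  constructor
  · intro l hl
    have hkey := key l hl
    rw [div_le_div_iff₀ hMpos (by positivity : (0:ℝ) < 2*δ^2*↑k), one_mul]
    exact hkey
  · intro s hs
    have hs0 : (0:ℝ) < (s:ℝ) := by exact_mod_cast hs
    have hsum : (∑ σ : ι, ((((Finset.range (n/k)).filter fun l =>
        (α + δ) * ↑k ≤ ((Finset.univ.filter fun j : Fin n =>
          l * k ≤ (j : ℕ) ∧ (j : ℕ) < (l + 1) * k ∧ X (F σ j) ≠ Y (F σ j)).card : ℝ)).card : ℝ)))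
        = ∑ l ∈ Finset.range (n/k), ((Finset.univ.filter fun σ : ι =>
        (α + δ) * ↑k ≤ ((Finset.univ.filter fun j : Fin n =>
          l * k ≤ (j : ℕ) ∧ (j : ℕ) < (l + 1) * k ∧ X (F σ j) ≠ Y (F σ j)).card : ℝ)).card : ℝ) := by
      have e : ∀ σ : ι, ((((Finset.range (n/k)).filter fun l =>
        (α + δ) * ↑k ≤ ((Finset.univ.filter fun j : Fin n =>
          l * k ≤ (j : ℕ) ∧ (j : ℕ) < (l + 1) * k ∧ X (F σ j) ≠ Y (F σ j)).card : ℝ)).card : ℝ))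
          = ∑ l ∈ Finset.range (n/k), if ((α + δ) * ↑k ≤ ((Finset.univ.filter fun j : Fin n =>
          l * k ≤ (j : ℕ) ∧ (j : ℕ) < (l + 1) * k ∧ X (F σ j) ≠ Y (F σ j)).card : ℝ)) then (1:ℝ) else 0 := by
        intro σ; rw [Finset.sum_boole]
      rw [Finset.sum_congr rfl (fun σ _ => e σ), Finset.sum_comm]
      exact Finset.sum_congr rfl (fun l _ => by rw [Finset.sum_boole])
    have hSsum : (∑ l ∈ Finset.range (n/k), ((Finset.univ.filter fun σ : ι =>
        (α + δ) * ↑k ≤ ((Finset.univ.filter fun j : Fin n =>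
          l * k ≤ (j : ℕ) ∧ (j : ℕ) < (l + 1) * k ∧ X (F σ j) ≠ Y (F σ j)).card : ℝ)).card : ℝ))
          * (2*δ^2*↑k) ≤ ((n/k : ℕ) : ℝ) * M := by
      rw [Finset.sum_mul]
      calc ∑ l ∈ Finset.range (n/k),
            ((Finset.univ.filter fun σ : ι =>
        (α + δ) * ↑k ≤ ((Finset.univ.filter fun j : Fin n =>
          l * k ≤ (j : ℕ) ∧ (j : ℕ) < (l + 1) * k ∧ X (F σ j) ≠ Y (F σ j)).card : ℝ)).card : ℝ) * (2*δ^2*↑k)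
          ≤ ∑ _l ∈ Finset.range (n/k), M :=
            Finset.sum_le_sum (fun l hl => key l (Finset.mem_range.1 hl))
        _ = ((n/k : ℕ) : ℝ) * M := by
            rw [Finset.sum_const, Finset.card_range, nsmul_eq_mul]
    set A : Finset ι := Finset.univ.filter (fun σ : ι =>
      (s : ℝ) / 2 ≤ ((((Finset.range (n/k)).filter fun l =>
        (α + δ) * ↑k ≤ ((Finset.univ.filter fun j : Fin n =>
          l * k ≤ (j : ℕ) ∧ (j : ℕ) < (l + 1) * k ∧ X (F σ j) ≠ Y (F σ j)).card : ℝ)).card : ℝ))) with hAdef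
    have hmarkov : (s:ℝ)/2 * (A.card : ℝ)
        ≤ ∑ l ∈ Finset.range (n/k), ((Finset.univ.filter fun σ : ι =>
        (α + δ) * ↑k ≤ ((Finset.univ.filter fun j : Fin n =>
          l * k ≤ (j : ℕ) ∧ (j : ℕ) < (l + 1) * k ∧ X (F σ j) ≠ Y (F σ j)).card : ℝ)).card : ℝ) := by
      rw [← hsum]
      calc (s:ℝ)/2 * (A.card : ℝ) = ∑ _σ ∈ A, (s:ℝ)/2 := by
            rw [Finset.sum_const, nsmul_eq_mul, mul_comm]
        _ ≤ ∑ σ ∈ A, ((((Finset.range (n/k)).filter fun l =>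
        (α + δ) * ↑k ≤ ((Finset.univ.filter fun j : Fin n =>
          l * k ≤ (j : ℕ) ∧ (j : ℕ) < (l + 1) * k ∧ X (F σ j) ≠ Y (F σ j)).card : ℝ)).card : ℝ)) :=
            Finset.sum_le_sum (fun σ hσ => (Finset.mem_filter.1 hσ).2)
        _ ≤ ∑ σ : ι, ((((Finset.range (n/k)).filter fun l =>
        (α + δ) * ↑k ≤ ((Finset.univ.filter fun j : Fin n =>
          l * k ≤ (j : ℕ) ∧ (j : ℕ) < (l + 1) * k ∧ X (F σ j) ≠ Y (F σ j)).card : ℝ)).card : ℝ)) :=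
            Finset.sum_le_sum_of_subset_of_nonneg (Finset.subset_univ _)
              (fun σ _ _ => Nat.cast_nonneg _)
    have hmK : ((n/k : ℕ) : ℝ) * ↑k = ↑n := by exact_mod_cast Nat.div_mul_cancel hdvd
    rw [div_le_div_iff₀ hMpos (by positivity : (0:ℝ) < ↑s * ↑k^2 * δ^2)]
    have t1 : ((s:ℝ)/2 * (A.card : ℝ)) * (2*δ^2*↑k)
        ≤ (∑ l ∈ Finset.range (n/k), ((Finset.univ.filter fun σ : ι =>
        (α + δ) * ↑k ≤ ((Finset.univ.filter fun j : Fin n =>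
          l * k ≤ (j : ℕ) ∧ (j : ℕ) < (l + 1) * k ∧ X (F σ j) ≠ Y (F σ j)).card : ℝ)).card : ℝ))
            * (2*δ^2*↑k) :=
      mul_le_mul_of_nonneg_right hmarkov (by positivity)
    have t2 : ((s:ℝ)/2 * (A.card : ℝ)) * (2*δ^2*↑k) ≤ ((n/k : ℕ) : ℝ) * M := t1.trans hSsum
    have t3 : (((s:ℝ)/2 * (A.card : ℝ)) * (2*δ^2*↑k)) * ↑k ≤ (((n/k : ℕ) : ℝ) * M) * ↑k :=
      mul_le_mul_of_nonneg_right t2 hKpos.le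
    calc (A.card : ℝ) * (↑s * ↑k^2 * δ^2)
        = (((s:ℝ)/2 * (A.card : ℝ)) * (2*δ^2*↑k)) * ↑k := by ring
      _ ≤ (((n/k : ℕ) : ℝ) * M) * ↑k := t3
      _ = ↑n * M := by rw [mul_right_comm, hmK]
end
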